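/- Let E be a real inner product space, b > 0, and let γ : [0,b] → E be a C¹ curve with γ(0) = γ(b) = o. Let L := max_{u ∈ [0,b]} ‖γ(u) − o‖. Then ∫₀^b ‖γ'(u)‖² du ≥ 4L²/b. (This is the energy lower bound for a loop in terms of its maximal excursion, used via the Cauchy–Schwarz inequality and the elementary bound 1/u₁ + 1/(b−u₁) ≥ 4/b in the proof of Lemma 2.1.) -/

import Mathlib

open Set MeasureTheory intervalIntegral

section Aux

variable {E : Type*} [NormedAddCommGroup E] [InnerProductSpace ℝ E]

/-- displacement bounded by integral of speed (no completeness: project on a unit vector) -/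
lemma aux_norm_sub_le (b : ℝ) (γ γ' : ℝ → E)
    (hγ : ∀ u ∈ Icc (0:ℝ) b, HasDerivWithinAt γ (γ' u) (Icc (0:ℝ) b) u)
    (hγ' : ContinuousOn γ' (Icc (0:ℝ) b))
    {s t : ℝ} (hs : 0 ≤ s) (hst : s ≤ t) (htb : t ≤ b) :
    ‖γ t - γ s‖ ≤ ∫ u in s..t, ‖γ' u‖ := by
  have hsub : Icc s t ⊆ Icc 0 b := Icc_subset_Icc hs htb
  have hsub' : uIcc s t ⊆ Icc 0 b := by rwa [uIcc_of_le hst]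
  have hintnorm : IntervalIntegrable (fun u => ‖γ' u‖) volume s t :=
    ((hγ'.mono hsub').norm).intervalIntegrable
  by_cases hvz : γ t - γ s = 0
  · rw [hvz, norm_zero]
    exact integral_nonneg hst fun x _ => norm_nonneg _
  set v := γ t - γ s with hv
  set e : E := ‖v‖⁻¹ • v with he
  have hvn : ‖v‖ ≠ 0 := norm_ne_zero_iff.mpr hvz
  have hen : ‖e‖ = 1 := by
    rw [he, norm_smul, norm_inv, norm_norm, inv_mul_cancel₀ hvn]
  set f : ℝ → ℝ := fun u => inner ℝ e (γ u) with hf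
  have hfd : ∀ u ∈ Icc s t, HasDerivWithinAt f (inner ℝ e (γ' u)) (Icc s t) u := by
    intro u hu
    exact ((innerSL ℝ e).hasFDerivAt.comp_hasDerivWithinAt u
      ((hγ u (hsub hu)).mono hsub))
  have hcont : ContinuousOn f (Icc s t) := fun x hx => (hfd x hx).continuousWithinAt
  have hint : IntervalIntegrable (fun u => (inner ℝ e (γ' u) : ℝ)) volume s t := by
    exact (((innerSL ℝ e).continuous.comp_continuousOn (hγ'.mono hsub'))).intervalIntegrable
  have heq : ∫ u in s..t, (inner ℝ e (γ' u) : ℝ) = f t - f s := by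
    apply integral_eq_sub_of_hasDeriv_right_of_le hst hcont _ hint
    intro x hx
    have hx' : Icc s t ∈ nhds x := Icc_mem_nhds hx.1 hx.2
    exact ((hfd x (Ioo_subset_Icc_self hx)).hasDerivAt hx').hasDerivWithinAt
  have hfts : f t - f s = ‖v‖ := by
    have : f t - f s = inner ℝ e v := by
      rw [hf, hv]; simp [inner_sub_right]
    rw [this, he, real_inner_smul_left, real_inner_self_eq_norm_sq]
    field_simp
  calc ‖γ t - γ s‖ = ∫ u in s..t, (inner ℝ e (γ' u) : ℝ) := by rw [heq, hfts]
    _ ≤ ∫ u in s..t, ‖γ' u‖ := by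
        apply integral_mono_on hst hint hintnorm
        intro x _
        calc (inner ℝ e (γ' x) : ℝ) ≤ ‖e‖ * ‖γ' x‖ := real_inner_le_norm _ _
          _ = ‖γ' x‖ := by rw [hen, one_mul]

/-- energy lower bound on a subinterval -/
lemma aux_energy (b : ℝ) (γ' : ℝ → E)
    (hγ' : ContinuousOn γ' (Icc (0:ℝ) b))
    {s t : ℝ} (hs : 0 ≤ s) (hst : s ≤ t) (htb : t ≤ b) (c : ℝ) :
    2 * c * (∫ u in s..t, ‖γ' u‖) - c ^ 2 * (t - s) ≤ ∫ u in s..t, ‖γ' u‖ ^ 2 := by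
  have hγ'' : ContinuousOn γ' (uIcc s t) := hγ'.mono (by
    rw [uIcc_of_le hst]; exact Icc_subset_Icc hs htb)
  have h1 : IntervalIntegrable (fun u => ‖γ' u‖) volume s t :=
    (hγ''.norm).intervalIntegrable
  have h2 : IntervalIntegrable (fun u => ‖γ' u‖ ^ 2) volume s t :=
    ((hγ''.norm).pow 2).intervalIntegrable
  have key : ∫ u in s..t, (2 * c * ‖γ' u‖ - c ^ 2) ≤ ∫ u in s..t, ‖γ' u‖ ^ 2 := by
    apply integral_mono_on hst ((h1.const_mul _).sub (intervalIntegrable_const)) h2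
    intro x _
    nlinarith [sq_nonneg (‖γ' x‖ - c)]
  have heq : ∫ u in s..t, (2 * c * ‖γ' u‖ - c ^ 2) =
      2 * c * (∫ u in s..t, ‖γ' u‖) - c ^ 2 * (t - s) := by
    rw [integral_sub (h1.const_mul _) intervalIntegrable_const, intervalIntegral.integral_const_mul,
      intervalIntegral.integral_const, smul_eq_mul]
    ring
  linarith [key, heq.ge, heq.le]

end Aux

theorem loop_energy_lower_bound
    {E : Type*} [NormedAddCommGroup E] [InnerProductSpace ℝ E]
    (b : ℝ) (hb : 0 < b) (o : E) (γ γ' : ℝ → E)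
    (hγ : ∀ u ∈ Icc (0:ℝ) b, HasDerivWithinAt γ (γ' u) (Icc (0:ℝ) b) u)
    (hγ' : ContinuousOn γ' (Icc (0:ℝ) b))
    (h0 : γ 0 = o) (hbo : γ b = o)
    (L : ℝ) (hL : IsGreatest ((fun u => ‖γ u - o‖) '' Icc (0:ℝ) b) L) :
    4 * L ^ 2 / b ≤ ∫ u in (0:ℝ)..b, ‖γ' u‖ ^ 2 := by
  obtain ⟨⟨u₁, hu₁mem, hu₁'⟩, hub⟩ := hL
  have hu₁ : ‖γ u₁ - o‖ = L := hu₁'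
  have hL0 : 0 ≤ L := hu₁ ▸ norm_nonneg _
  have hsplit : (∫ u in (0:ℝ)..u₁, ‖γ' u‖ ^ 2) + (∫ u in u₁..b, ‖γ' u‖ ^ 2)
      = ∫ u in (0:ℝ)..b, ‖γ' u‖ ^ 2 := by
    apply integral_add_adjacent_intervals
    · exact ((hγ'.mono (by rw [uIcc_of_le hu₁mem.1]; exact Icc_subset_Icc le_rfl hu₁mem.2)).norm.pow
        2).intervalIntegrable
    · exact ((hγ'.mono (by rw [uIcc_of_le hu₁mem.2]; exact Icc_subset_Icc hu₁mem.1 le_rfl)).norm.pow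
        2).intervalIntegrable
  rcases eq_or_lt_of_le hL0 with hLz | hLpos
  · rw [← hLz]
    have : (0:ℝ) ≤ ∫ u in (0:ℝ)..b, ‖γ' u‖ ^ 2 :=
      integral_nonneg hb.le fun x _ => by positivity
    simpa using this
  · have hu₁0 : 0 < u₁ := by
      rcases hu₁mem.1.lt_or_eq with h | h
      · exact h
      · exfalso; rw [← h, h0, sub_self, norm_zero] at hu₁; linarith
    have hu₁b : u₁ < b := by
      rcases hu₁mem.2.lt_or_eq with h | h
      · exact h
      · exfalso; rw [h, hbo, sub_self, norm_zero] at hu₁; linarith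
    have hdisp1 : L ≤ ∫ u in (0:ℝ)..u₁, ‖γ' u‖ := by
      have := aux_norm_sub_le b γ γ' hγ hγ' le_rfl hu₁mem.1 hu₁mem.2
      rw [h0] at this; rw [← hu₁]; exact this
    have hdisp2 : L ≤ ∫ u in u₁..b, ‖γ' u‖ := by
      have := aux_norm_sub_le b γ γ' hγ hγ' hu₁mem.1 hu₁mem.2 le_rfl
      rw [hbo, ← norm_neg, neg_sub] at this
      rw [← hu₁]; exact this
    have he1 := aux_energy b γ' hγ' le_rfl hu₁mem.1 hu₁mem.2 (L / u₁)
    have he2 := aux_energy b γ' hγ' hu₁mem.1 hu₁mem.2 le_rfl (L / (b - u₁))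
    have hE1 : L ^ 2 / u₁ ≤ ∫ u in (0:ℝ)..u₁, ‖γ' u‖ ^ 2 := by
      have hc : 2 * (L / u₁) * L - (L / u₁) ^ 2 * (u₁ - 0) = L ^ 2 / u₁ := by
        field_simp; ring
      have hmul : 2 * (L / u₁) * L ≤ 2 * (L / u₁) * (∫ u in (0:ℝ)..u₁, ‖γ' u‖) := by
        apply mul_le_mul_of_nonneg_left hdisp1
        positivity
      linarith
    have hE2 : L ^ 2 / (b - u₁) ≤ ∫ u in u₁..b, ‖γ' u‖ ^ 2 := by
      have hne : b - u₁ ≠ 0 := by linarith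
      have hc : 2 * (L / (b - u₁)) * L - (L / (b - u₁)) ^ 2 * (b - u₁) = L ^ 2 / (b - u₁) := by
        field_simp; ring
      have hmul : 2 * (L / (b - u₁)) * L ≤ 2 * (L / (b - u₁)) * (∫ u in u₁..b, ‖γ' u‖) := by
        apply mul_le_mul_of_nonneg_left hdisp2
        have : (0:ℝ) < b - u₁ := by linarith
        positivity
      linarith
    have harith : 4 * L ^ 2 / b ≤ L ^ 2 / u₁ + L ^ 2 / (b - u₁) := by
      rw [div_add_div _ _ (ne_of_gt hu₁0) (by linarith : b - u₁ ≠ 0),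
        div_le_div_iff₀ hb (by nlinarith)]
      nlinarith [sq_nonneg (b - 2 * u₁), sq_nonneg L]
    linarith
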